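/- The integrals I₂ = v₀v₃ - v₂ + v₁v₄ and I₃ = (v₁+1)(v₀+v₂+2) + (v₃+1)(v₂+v₄+2) + (v₀+1)(v₁+v₃+1)(v₄+1)/v₂ of the Lotka-Volterra (3,-2) reduction are in involution: ∇I₂ · Ω · (∇I₃)ᵀ = 0, where Ω is the skew-symmetric matrix with entries Ω₁₃ = (v₀+1)(v₂+1), Ω₁₄ = -(v₀+1)(v₃+1), Ω₁₅ = (v₀+1)(1/v₂+1)(v₄+1), Ω₂₄ = (v₁+1)(v₃+1), Ω₂₅ = -(v₁+1)(v₄+1), Ω₃₅ = (v₂+1)(v₄+1). -/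

import Mathlib

open Matrix

/-- The structure matrix of the Lotka-Volterra (3,-2) reduction. -/
noncomputable def lvOmega (v : Fin 5 → ℝ) : Matrix (Fin 5) (Fin 5) ℝ :=
  !![0, 0, (v 0 + 1)*(v 2 + 1), -((v 0 + 1)*(v 3 + 1)), (v 0 + 1)*(1/(v 2) + 1)*(v 4 + 1);
     0, 0, 0, (v 1 + 1)*(v 3 + 1), -((v 1 + 1)*(v 4 + 1));
     -((v 0 + 1)*(v 2 + 1)), 0, 0, 0, (v 2 + 1)*(v 4 + 1);
     (v 0 + 1)*(v 3 + 1), -((v 1 + 1)*(v 3 + 1)), 0, 0, 0;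
     -((v 0 + 1)*(1/(v 2) + 1)*(v 4 + 1)), (v 1 + 1)*(v 4 + 1), -((v 2 + 1)*(v 4 + 1)), 0, 0]

/-- The integral I₂ of the Lotka-Volterra reduction. -/
noncomputable def lvI2 (v : Fin 5 → ℝ) : ℝ := v 0 * v 3 - v 2 + v 1 * v 4

/-- The integral I₃ of the Lotka-Volterra reduction. -/
noncomputable def lvI3 (v : Fin 5 → ℝ) : ℝ :=
  (v 1 + 1) * (v 0 + v 2 + 2) + (v 3 + 1) * (v 2 + v 4 + 2)
    + (v 0 + 1) * (v 1 + v 3 + 1) * (v 4 + 1) / v 2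

/-- Gradient of a function on ℝ⁵ (vector of partial derivatives). -/
noncomputable def grad (f : (Fin 5 → ℝ) → ℝ) (v : Fin 5 → ℝ) : Fin 5 → ℝ :=
  fun l => deriv (fun t => f (Function.update v l t)) (v l)


lemma deriv_linear (A B x : ℝ) : deriv (fun t : ℝ => A * t + B) x = A := by
  rw [deriv_add_const, deriv_const_mul _ (by fun_prop), deriv_id'']; ring

lemma deriv_lin_inv (A B C x : ℝ) (h : x ≠ 0) :
    deriv (fun t : ℝ => A * t + C * t⁻¹ + B) x = A - C / x ^ 2 := by
  rw [deriv_add_const, deriv_fun_add (by fun_prop) (by fun_prop (disch := exact h)),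
    deriv_const_mul _ (by fun_prop), deriv_const_mul _ (by fun_prop (disch := exact h)),
    deriv_inv, deriv_id'']
  field_simp; ring

set_option maxHeartbeats 1000000 in
/-- I₂ and I₃ are in involution with respect to the Lotka-Volterra Poisson bracket. -/
theorem lvI2_I3_involution (v : Fin 5 → ℝ) (h : v 2 ≠ 0) :
    grad lvI2 v ⬝ᵥ (lvOmega v *ᵥ grad lvI3 v) = 0 := by
  have e2 : ∀ l, ∃ B, (fun t => lvI2 (Function.update v l t)) =
      fun t => ![v 3, v 4, -1, v 0, v 1] l * t + B := by
    intro l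
    fin_cases l
    · exact ⟨- v 2 + v 1 * v 4, by funext t; simp [lvI2, Function.update]; ring⟩
    · exact ⟨v 0 * v 3 - v 2, by funext t; simp [lvI2, Function.update]; ring⟩
    · exact ⟨v 0 * v 3 + v 1 * v 4, by funext t; simp [lvI2, Function.update]; ring⟩
    · exact ⟨- v 2 + v 1 * v 4, by funext t; simp [lvI2, Function.update]; ring⟩
    · exact ⟨v 0 * v 3 - v 2, by funext t; simp [lvI2, Function.update]; ring⟩
  have g2 : grad lvI2 v = ![v 3, v 4, -1, v 0, v 1] := by
    funext l
    obtain ⟨B, hB⟩ := e2 l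
    rw [grad, hB, deriv_linear]
  have g3 : grad lvI3 v = ![
      (v 1 + 1) + (v 1 + v 3 + 1) * (v 4 + 1) / v 2,
      (v 0 + v 2 + 2) + (v 0 + 1) * (v 4 + 1) / v 2,
      (v 1 + 1) + (v 3 + 1) - (v 0 + 1) * (v 1 + v 3 + 1) * (v 4 + 1) / v 2 ^ 2,
      (v 2 + v 4 + 2) + (v 0 + 1) * (v 4 + 1) / v 2,
      (v 3 + 1) + (v 0 + 1) * (v 1 + v 3 + 1) / v 2] := by
    have e0 : (fun t => lvI3 (Function.update v 0 t)) =
        fun t => ((v 1 + 1) + (v 1 + v 3 + 1) * (v 4 + 1) / v 2) * t +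
          ((v 1 + 1) * (v 2 + 2) + (v 3 + 1) * (v 2 + v 4 + 2)
            + (v 1 + v 3 + 1) * (v 4 + 1) / v 2) := by
      funext t; simp [lvI3, Function.update]; field_simp; ring
    have e1 : (fun t => lvI3 (Function.update v 1 t)) =
        fun t => ((v 0 + v 2 + 2) + (v 0 + 1) * (v 4 + 1) / v 2) * t +
          ((v 0 + v 2 + 2) + (v 3 + 1) * (v 2 + v 4 + 2)
            + (v 0 + 1) * (v 3 + 1) * (v 4 + 1) / v 2) := by
      funext t; simp [lvI3, Function.update]; field_simp; ring
    have e2 : (fun t => lvI3 (Function.update v 2 t)) =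
        fun t => ((v 1 + 1) + (v 3 + 1)) * t +
          ((v 0 + 1) * (v 1 + v 3 + 1) * (v 4 + 1)) * t⁻¹ +
          ((v 1 + 1) * (v 0 + 2) + (v 3 + 1) * (v 4 + 2)) := by
      funext t; simp [lvI3, Function.update]; ring
    have e3 : (fun t => lvI3 (Function.update v 3 t)) =
        fun t => ((v 2 + v 4 + 2) + (v 0 + 1) * (v 4 + 1) / v 2) * t +
          ((v 1 + 1) * (v 0 + v 2 + 2) + (v 2 + v 4 + 2)
            + (v 0 + 1) * (v 1 + 1) * (v 4 + 1) / v 2) := by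
      funext t; simp [lvI3, Function.update]; field_simp; ring
    have e4 : (fun t => lvI3 (Function.update v 4 t)) =
        fun t => ((v 3 + 1) + (v 0 + 1) * (v 1 + v 3 + 1) / v 2) * t +
          ((v 1 + 1) * (v 0 + v 2 + 2) + (v 3 + 1) * (v 2 + 2)
            + (v 0 + 1) * (v 1 + v 3 + 1) / v 2) := by
      funext t; simp [lvI3, Function.update]; field_simp; ring
    funext l
    fin_cases l
    · show deriv (fun t => lvI3 (Function.update v 0 t)) (v 0) = _
      rw [e0, deriv_linear]; simp
    · show deriv (fun t => lvI3 (Function.update v 1 t)) (v 1) = _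
      rw [e1, deriv_linear]; simp
    · show deriv (fun t => lvI3 (Function.update v 2 t)) (v 2) = _
      rw [e2, deriv_lin_inv _ _ _ _ h]; simp
    · show deriv (fun t => lvI3 (Function.update v 3 t)) (v 3) = _
      rw [e3, deriv_linear]; simp
    · show deriv (fun t => lvI3 (Function.update v 4 t)) (v 4) = _
      rw [e4, deriv_linear]; simp
  rw [g2, g3, lvOmega]
  rw [show ((0:Fin 5) : Fin 5) = 0 from rfl]
  simp only [dotProduct, mulVec, Fin.sum_univ_five, Matrix.cons_val', Matrix.cons_val_zero,
    Matrix.cons_val_one, Matrix.head_cons, Matrix.empty_val', Matrix.cons_val_fin_one,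
    Matrix.head_fin_const, Matrix.cons_val_two, Matrix.tail_cons, Matrix.cons_val_three,
    Matrix.cons_val_four, Matrix.head_fin_const, Matrix.of_apply]
  field_simp
  ring
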